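/- Fix α ∈ (0,1). Let a, r : (0,∞) → (0,∞) satisfy a(θ) → ∞, a(θ)/√θ → 0, (log θ)/r(θ) → 0, and a(θ)² r(θ)/θ → ∞ as θ → ∞. Then (a(θ)²/θ) · log( 1 − (1 + c_α r(θ)^{−α} ∫_1^∞ z^{−(1+α)} e^{−r(θ) z} dz)^{−θ/α} ) → −∞ as θ → ∞. -/

import Mathlib

open MeasureTheory Filter Set

/-- `c_α = α / Γ(1-α)`. -/
noncomputable def cAlpha (α : ℝ) : ℝ := α / Real.Gamma (1 - α)

lemma trunc_integrable (α rθ : ℝ) (hα : 0 < α) (hr : 0 < rθ) :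
    IntegrableOn (fun z : ℝ => z ^ (-(1+α)) * Real.exp (-(rθ * z))) (Ioi 1) := by
  have hmeas : AEStronglyMeasurable (fun z : ℝ => z ^ (-(1+α)) * Real.exp (-(rθ * z)))
      (volume.restrict (Ioi 1)) := by
    refine ContinuousOn.aestronglyMeasurable ?_ measurableSet_Ioi
    exact (continuousOn_id.rpow_const fun x hx => Or.inl (ne_of_gt (lt_trans one_pos hx))).mul
      ((Real.continuous_exp.comp (continuous_const.mul continuous_id).neg).continuousOn)
  refine Integrable.mono' (g := fun z => Real.exp (-rθ * z))
    (exp_neg_integrableOn_Ioi 1 hr) hmeas ?_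
  filter_upwards [ae_restrict_mem measurableSet_Ioi] with z hz
  have hz1 : (1:ℝ) ≤ z := le_of_lt hz
  have h1 : z ^ (-(1+α)) ≤ 1 := Real.rpow_le_one_of_one_le_of_nonpos hz1 (by linarith)
  have h2 : 0 < z ^ (-(1+α)) := Real.rpow_pos_of_pos (by linarith) _
  have h3 : 0 < Real.exp (-(rθ*z)) := Real.exp_pos _
  rw [Real.norm_eq_abs, abs_of_pos (mul_pos h2 h3)]
  calc z ^ (-(1+α)) * Real.exp (-(rθ*z)) ≤ 1 * Real.exp (-(rθ*z)) :=
        mul_le_mul_of_nonneg_right h1 h3.le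
    _ = Real.exp (-rθ*z) := by rw [one_mul, neg_mul]

lemma trunc_pos (α rθ : ℝ) (hα : 0 < α) (hr : 0 < rθ) :
    0 < ∫ z in Ioi (1:ℝ), z ^ (-(1+α)) * Real.exp (-(rθ * z)) := by
  rw [setIntegral_pos_iff_support_of_nonneg_ae ?_ (trunc_integrable α rθ hα hr)]
  · refine lt_of_lt_of_le ?_ (measure_mono (?_ :
      Ioi (1:ℝ) ⊆ Function.support (fun z : ℝ => z ^ (-(1+α)) * Real.exp (-(rθ * z))) ∩ Ioi 1))
    · simp [Real.volume_Ioi]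
    · intro z hz
      refine ⟨?_, hz⟩
      have h2 : 0 < z ^ (-(1+α)) := Real.rpow_pos_of_pos (lt_trans one_pos hz) _
      exact ne_of_gt (mul_pos h2 (Real.exp_pos _))
  · filter_upwards [ae_restrict_mem measurableSet_Ioi] with z hz
    have h2 : 0 < z ^ (-(1+α)) := Real.rpow_pos_of_pos (lt_trans one_pos hz) _
    exact (mul_pos h2 (Real.exp_pos _)).le

lemma trunc_le (α rθ : ℝ) (hα : 0 < α) (hr : 1 ≤ rθ) :
    (∫ z in Ioi (1:ℝ), z ^ (-(1+α)) * Real.exp (-(rθ * z))) ≤ Real.exp (-rθ) := by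
  have hint2 : IntegrableOn (fun z : ℝ => Real.exp (-rθ+1) * Real.exp (-z)) (Ioi 1) := by
    have := (exp_neg_integrableOn_Ioi 1 one_pos).const_mul (Real.exp (-rθ+1))
    simpa [neg_one_mul, IntegrableOn] using this
  have h1 : (∫ z in Ioi (1:ℝ), z ^ (-(1+α)) * Real.exp (-(rθ * z)))
      ≤ ∫ z in Ioi (1:ℝ), Real.exp (-rθ+1) * Real.exp (-z) := by
    refine setIntegral_mono_on (trunc_integrable α rθ hα (by linarith)) hint2
      measurableSet_Ioi ?_
    intro z hz
    have hz1 : (1:ℝ) ≤ z := le_of_lt hz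
    have h1 : z ^ (-(1+α)) ≤ 1 := Real.rpow_le_one_of_one_le_of_nonpos hz1 (by linarith)
    have h2 : 0 < z ^ (-(1+α)) := Real.rpow_pos_of_pos (by linarith) _
    have h3 : Real.exp (-(rθ*z)) ≤ Real.exp (-rθ+1) * Real.exp (-z) := by
      rw [← Real.exp_add]
      exact Real.exp_le_exp.mpr (by nlinarith)
    calc z ^ (-(1+α)) * Real.exp (-(rθ*z)) ≤ 1 * (Real.exp (-rθ+1) * Real.exp (-z)) := by
          exact mul_le_mul h1 h3 (Real.exp_pos _).le one_pos.le
      _ = Real.exp (-rθ+1) * Real.exp (-z) := one_mul _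
  calc (∫ z in Ioi (1:ℝ), z ^ (-(1+α)) * Real.exp (-(rθ * z)))
      ≤ ∫ z in Ioi (1:ℝ), Real.exp (-rθ+1) * Real.exp (-z) := h1
    _ = Real.exp (-rθ+1) * ∫ z in Ioi (1:ℝ), Real.exp (-z) := integral_const_mul _ _
    _ = Real.exp (-rθ+1) * Real.exp (-1) := by rw [integral_exp_neg_Ioi]
    _ = Real.exp (-rθ) := by rw [← Real.exp_add]; ring_nf

/-- For `α ∈ (0,1)` and functions `a, r : (0,∞) → (0,∞)` with `a(θ) → ∞`, `a(θ)/√θ → 0`,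
`log θ / r(θ) → 0` and `a(θ)² r(θ)/θ → ∞`, one has
`(a(θ)²/θ) log(1 - (1 + c_α r(θ)^{-α} ∫_1^∞ z^{-(1+α)} e^{-r(θ)z} dz)^{-θ/α}) → -∞`. -/
theorem truncation_exponential_negligible (α : ℝ) (hα : α ∈ Set.Ioo (0:ℝ) 1)
    (a r : ℝ → ℝ) (hapos : ∀ θ > (0:ℝ), 0 < a θ) (hrpos : ∀ θ > (0:ℝ), 0 < r θ)
    (ha : Filter.Tendsto a Filter.atTop Filter.atTop)
    (ha' : Filter.Tendsto (fun θ => a θ / Real.sqrt θ) Filter.atTop (nhds 0))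
    (hr : Filter.Tendsto (fun θ => Real.log θ / r θ) Filter.atTop (nhds 0))
    (har : Filter.Tendsto (fun θ => a θ ^ 2 * r θ / θ) Filter.atTop Filter.atTop) :
    Filter.Tendsto
      (fun θ : ℝ => a θ ^ 2 / θ *
        Real.log (1 - (1 + cAlpha α * r θ ^ (-α) *
          ∫ z in Set.Ioi (1:ℝ), z ^ (-(1 + α)) * Real.exp (-(r θ * z))) ^ (-(θ / α))))
      Filter.atTop Filter.atBot := by
  obtain ⟨hα0, hα1⟩ := hα
  have hc : 0 < cAlpha α := div_pos hα0 (Real.Gamma_pos_of_pos (by linarith))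
  set K : ℝ := Real.log (cAlpha α / α) with hK
  have hglim : Tendsto (fun θ => -(a θ ^ 2 * r θ / θ) / 2) atTop atBot := by
    have h2 : Tendsto (fun θ => a θ ^ 2 * r θ / θ / 2) atTop atTop :=
      har.atTop_div_const two_pos
    have heq : (fun θ => -(a θ ^ 2 * r θ / θ) / 2)
        = (Neg.neg ∘ fun θ => a θ ^ 2 * r θ / θ / 2) := by
      funext θ; simp [Function.comp, neg_div]
    rw [heq]
    exact tendsto_neg_atTop_atBot.comp h2
  refine tendsto_atBot_mono' atTop ?_ hglim
  have hev1 : ∀ᶠ θ : ℝ in atTop, Real.exp (2 + |K|) ≤ θ := eventually_ge_atTop _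
  have hev2 : ∀ᶠ θ : ℝ in atTop, Real.log θ / r θ < 1/4 :=
    hr.eventually (Iio_mem_nhds (by norm_num))
  filter_upwards [hev1, hev2] with θ hθ1 hθ2
  have hθpos : 0 < θ := lt_of_lt_of_le (Real.exp_pos _) hθ1
  have hrθ : 0 < r θ := hrpos θ hθpos
  have haθ : 0 < a θ := hapos θ hθpos
  have hlogθ : 2 + |K| ≤ Real.log θ := by
    have := Real.log_le_log (Real.exp_pos _) hθ1
    rwa [Real.log_exp] at this
  have hlog2 : 0 < Real.log θ := by have := abs_nonneg K; linarith
  have hlr : Real.log θ < r θ / 4 := by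
    have := (div_lt_iff₀ hrθ).mp hθ2
    linarith
  have hr1 : (1:ℝ) ≤ r θ := by
    have : (2:ℝ) ≤ Real.log θ := by
      have := abs_nonneg K; linarith
    linarith
  have hKle : K ≤ r θ / 4 := by
    have : K ≤ |K| := le_abs_self K
    linarith
  -- notation
  set I : ℝ := ∫ z in Set.Ioi (1:ℝ), z ^ (-(1 + α)) * Real.exp (-(r θ * z)) with hIdef
  have hIpos : 0 < I := trunc_pos α (r θ) hα0 hrθ
  have hIle : I ≤ Real.exp (-(r θ)) := trunc_le α (r θ) hα0 hr1
  set s : ℝ := cAlpha α * r θ ^ (-α) * I with hsdef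
  have hrpow : (0:ℝ) < r θ ^ (-α) := Real.rpow_pos_of_pos hrθ _
  have hrpow1 : r θ ^ (-α) ≤ 1 :=
    Real.rpow_le_one_of_one_le_of_nonpos hr1 (by linarith)
  have hspos : 0 < s := mul_pos (mul_pos hc hrpow) hIpos
  have hb1 : (1:ℝ) < 1 + s := by linarith
  set y : ℝ := θ / α * Real.log (1 + s) with hydef
  have hlogb : 0 < Real.log (1 + s) := Real.log_pos hb1
  have hypos : 0 < y := mul_pos (div_pos hθpos hα0) hlogb
  have hXdef : (1 + s) ^ (-(θ / α)) = Real.exp (-y) := by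
    rw [Real.rpow_def_of_pos (by linarith), hydef]
    ring_nf
  have hX1 : (1 + s) ^ (-(θ / α)) < 1 := by
    refine Real.rpow_lt_one_of_one_lt_of_neg hb1 ?_
    have : 0 < θ / α := div_pos hθpos hα0
    linarith
  have hXpos : 0 < (1 + s) ^ (-(θ / α)) := Real.rpow_pos_of_pos (by linarith) _
  have h1X : 0 < 1 - (1 + s) ^ (-(θ / α)) := by linarith
  have h1Xy : 1 - (1 + s) ^ (-(θ / α)) ≤ y := by
    rw [hXdef]
    have := Real.add_one_le_exp (-y)
    linarith
  -- y ≤ θ * (cAlpha α / α) * exp (-(r θ))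
  have hyY : y ≤ θ * (cAlpha α / α) * Real.exp (-(r θ)) := by
    have hlogs : Real.log (1 + s) ≤ s := by
      have := Real.log_le_sub_one_of_pos (show (0:ℝ) < 1 + s by linarith)
      linarith
    have hsle : s ≤ cAlpha α * Real.exp (-(r θ)) := by
      calc s = cAlpha α * r θ ^ (-α) * I := hsdef
        _ ≤ cAlpha α * 1 * Real.exp (-(r θ)) := by
            apply mul_le_mul (mul_le_mul_of_nonneg_left hrpow1 hc.le) hIle hIpos.le
            positivity
        _ = cAlpha α * Real.exp (-(r θ)) := by ring
    calc y = θ / α * Real.log (1 + s) := hydef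
      _ ≤ θ / α * (cAlpha α * Real.exp (-(r θ))) := by
          apply mul_le_mul_of_nonneg_left (le_trans hlogs hsle)
          positivity
      _ = θ * (cAlpha α / α) * Real.exp (-(r θ)) := by ring
  have hlogchain : Real.log (1 - (1 + s) ^ (-(θ / α))) ≤ -(r θ) / 2 := by
    have hstep1 : Real.log (1 - (1 + s) ^ (-(θ / α))) ≤ Real.log y :=
      Real.log_le_log h1X h1Xy
    have hstep2 : Real.log y ≤ Real.log (θ * (cAlpha α / α) * Real.exp (-(r θ))) :=
      Real.log_le_log hypos hyY
    have hstep3 : Real.log (θ * (cAlpha α / α) * Real.exp (-(r θ)))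
        = Real.log θ + K + (-(r θ)) := by
      rw [Real.log_mul (by positivity) (Real.exp_ne_zero _),
        Real.log_mul (ne_of_gt hθpos) (by positivity), Real.log_exp, hK]
    have : Real.log θ + K + (-(r θ)) ≤ -(r θ) / 2 := by linarith
    linarith
  -- final multiplication
  have hfrac : 0 ≤ a θ ^ 2 / θ := by positivity
  calc a θ ^ 2 / θ * Real.log (1 - (1 + s) ^ (-(θ / α)))
      ≤ a θ ^ 2 / θ * (-(r θ) / 2) := mul_le_mul_of_nonneg_left hlogchain hfrac
    _ = -(a θ ^ 2 * r θ / θ) / 2 := by ring
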